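/- There exists a language K and alphabets E₁, E₂, E_k such that K is conditionally decomposable with respect to E₁, E₂, E_k but the prefix closure \overline{K} is not conditionally decomposable with respect to the same alphabets. Concretely, for E₁ = {a₁,b₁,a,b}, E₂ = {a₂,b₂,a,b}, E_k = {a,b} and K = {a₁a₂a, a₂a₁a, b₁b₂b, b₂b₁b}, it holds that K = P_{1+k}(K) ∥ P_{2+k}(K) but \overline{K} ≠ \overline{P_{1+k}(K)} ∥ \overline{P_{2+k}(K)} (in particular a₁b₂ ∈ \overline{P_{1+k}(K)} ∥ \overline{P_{2+k}(K)} but a₁b₂ ∉ \overline{K}). -/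
import Mathlib


open scoped Classical

/-- Natural projection: erase letters not in `A`. -/
noncomputable def proj {Ev : Type*} (A : Set Ev) (w : List Ev) : List Ev :=
  w.filter (fun a => decide (a ∈ A))

/-- Projection of a language. -/
noncomputable def projL {Ev : Type*} (A : Set Ev) (L : Set (List Ev)) : Set (List Ev) :=
  proj A '' L

/-- Words over an alphabet `A`, i.e., `A*`. -/
def star {Ev : Type*} (A : Set Ev) : Set (List Ev) := {w | ∀ a ∈ w, a ∈ A}

/-- Synchronous product of `L₁ ⊆ A*` and `L₂ ⊆ B*`. -/
noncomputable def sync {Ev : Type*} (A B : Set Ev) (L1 L2 : Set (List Ev)) :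
    Set (List Ev) :=
  {w | w ∈ star (A ∪ B) ∧ proj A w ∈ L1 ∧ proj B w ∈ L2}

/-- Prefix closure of a language. -/
def prefixCl {Ev : Type*} (L : Set (List Ev)) : Set (List Ev) := {w | ∃ v, w ++ v ∈ L}

/-- Controllability of `K` with respect to (prefix-closed) `L` and uncontrollable events `Eu`. -/
def controllable {Ev : Type*} (K L : Set (List Ev)) (Eu : Set Ev) : Prop :=
  ∀ s ∈ prefixCl K, ∀ u ∈ Eu, s ++ [u] ∈ L → s ++ [u] ∈ prefixCl K

/-- Supremal controllable sublanguage of `K` w.r.t. `N` and `U`. -/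
noncomputable def supC {Ev : Type*} (K N : Set (List Ev)) (U : Set Ev) : Set (List Ev) :=
  ⋃₀ {M | M ⊆ K ∧ controllable M N U}

/-- `proj A` is an `L`-observer. -/
def observer {Ev : Type*} (A : Set Ev) (L : Set (List Ev)) : Prop :=
  ∀ t ∈ projL A L, ∀ s ∈ prefixCl L, proj A s <+: t →
    ∃ u, s ++ u ∈ L ∧ proj A (s ++ u) = t

/-- `proj A` is locally control consistent (LCC) for `L` (w.r.t. uncontrollable events `Eu`). -/
def lcc {Ev : Type*} (A Eu : Set Ev) (L : Set (List Ev)) : Prop :=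
  ∀ s ∈ L, ∀ σ ∈ A ∩ Eu, proj A s ++ [σ] ∈ projL A L →
    (∃ u, (∀ a ∈ u, a ∉ A) ∧ s ++ u ++ [σ] ∈ L) →
    ∃ u, (∀ a ∈ u, a ∈ Eu ∧ a ∉ A) ∧ s ++ u ++ [σ] ∈ L

/-- Events for the counterexample of STATEMENT 1. -/
inductive Ev1 where
  | a1 | b1 | a2 | b2 | a | b
deriving DecidableEq


section Aux
open Ev1

lemma proj_nil {Ev : Type*} (A : Set Ev) : proj A [] = [] := rfl

lemma proj_cons {Ev : Type*} (A : Set Ev) (x : Ev) (w : List Ev) :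
    proj A (x :: w) = if x ∈ A then x :: proj A w else proj A w := by
  by_cases h : x ∈ A <;> simp [proj, List.filter_cons, h]

def F1 : Set Ev1 := ({a1, b1, a, b} : Set Ev1) ∪ ({a, b} : Set Ev1)
def F2 : Set Ev1 := ({a2, b2, a, b} : Set Ev1) ∪ ({a, b} : Set Ev1)
def FK : Set Ev1 := ({a, b} : Set Ev1)

lemma mem_F1 (x : Ev1) : x ∈ F1 ↔ x = a1 ∨ x = b1 ∨ x = a ∨ x = b := by
  cases x <;> simp [F1, Set.mem_union]

lemma mem_F2 (x : Ev1) : x ∈ F2 ↔ x = a2 ∨ x = b2 ∨ x = a ∨ x = b := by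
  cases x <;> simp [F2, Set.mem_union]

lemma mem_FK (x : Ev1) : x ∈ FK ↔ x = a ∨ x = b := by
  cases x <;> simp [FK]

lemma len_lemma (w : List Ev1) :
    (proj F1 w).length + (proj F2 w).length = w.length + (proj FK w).length := by
  induction w with
  | nil => simp [proj_nil]
  | cons x t ih =>
    cases x <;> simp [proj_cons, mem_F1, mem_F2, mem_FK] <;> omega

lemma projK_eq (w : List Ev1) : proj FK w = proj FK (proj F1 w) := by
  induction w with
  | nil => simp [proj_nil]
  | cons x t ih =>
    cases x <;> simp [proj_cons, mem_F1, mem_FK] <;> simpa [proj_cons, mem_FK] using ih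

lemma hard (w : List Ev1)
    (h1 : proj F1 w = [a1, a] ∨ proj F1 w = [b1, b])
    (h2 : proj F2 w = [a2, a] ∨ proj F2 w = [b2, b]) :
    w ∈ ({[a1, a2, a], [a2, a1, a], [b1, b2, b], [b2, b1, b]} : Set (List Ev1)) := by
  have hk : (proj FK w).length = 1 := by
    have hc := projK_eq w
    rcases h1 with h | h <;> rw [hc, h] <;> simp [proj_cons, proj_nil, mem_FK]
  have hlen : w.length = 3 := by
    have hl := len_lemma w
    rw [hk] at hl
    rcases h1 with h | h <;> rcases h2 with h' | h' <;>
      rw [h, h'] at hl <;> simp at hl <;> omega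
  match w, hlen with
  | [x, y, z], _ =>
    cases x <;> cases y <;> cases z <;>
      simp_all [proj_cons, mem_F1, mem_F2]

def KS : Set (List Ev1) := {[a1, a2, a], [a2, a1, a], [b1, b2, b], [b2, b1, b]}

lemma projL1 : projL F1 KS = {[a1, a], [b1, b]} := by
  ext w
  simp [projL, KS, Set.mem_image, proj_cons, proj_nil, mem_F1]
  tauto

lemma projL2 : projL F2 KS = {[a2, a], [b2, b]} := by
  ext w
  simp [projL, KS, Set.mem_image, proj_cons, proj_nil, mem_F2]
  tauto

lemma part1 : KS = sync F1 F2 (projL F1 KS) (projL F2 KS) := by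
  ext w
  constructor
  · intro hw
    refine ⟨?_, ?_, ?_⟩
    · intro x hx
      cases x <;> simp [Set.mem_union, mem_F1, mem_F2]
    · rw [projL1]
      simp only [KS, Set.mem_insert_iff, Set.mem_singleton_iff] at hw
      rcases hw with rfl | rfl | rfl | rfl <;>
        simp [proj_cons, proj_nil, mem_F1]
    · rw [projL2]
      simp only [KS, Set.mem_insert_iff, Set.mem_singleton_iff] at hw
      rcases hw with rfl | rfl | rfl | rfl <;>
        simp [proj_cons, proj_nil, mem_F2]
  · rintro ⟨-, h1, h2⟩
    rw [projL1] at h1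
    rw [projL2] at h2
    simp only [Set.mem_insert_iff, Set.mem_singleton_iff] at h1 h2
    exact hard w h1 h2

lemma part2 :
    [a1, b2] ∈ sync F1 F2 (prefixCl (projL F1 KS)) (prefixCl (projL F2 KS)) := by
  refine ⟨?_, ?_, ?_⟩
  · intro x hx
    simp only [List.mem_cons, List.not_mem_nil, or_false] at hx
    rcases hx with rfl | rfl <;> simp [Set.mem_union, mem_F1, mem_F2]
  · rw [projL1]
    refine ⟨[Ev1.a], ?_⟩
    simp [proj_cons, proj_nil, mem_F1]
  · rw [projL2]
    refine ⟨[Ev1.b], ?_⟩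
    simp [proj_cons, proj_nil, mem_F2]

lemma part3 : [a1, b2] ∉ prefixCl KS := by
  rintro ⟨v, hv⟩
  simp [KS, Set.mem_insert_iff, Set.mem_singleton_iff] at hv

end Aux

open Ev1 in
/-- K is conditionally decomposable but its prefix closure is not. -/
theorem stmt1 :
    let E1 : Set Ev1 := {a1, b1, a, b}
    let E2 : Set Ev1 := {a2, b2, a, b}
    let Ek : Set Ev1 := {a, b}
    let K : Set (List Ev1) :=
      {[a1, a2, a], [a2, a1, a], [b1, b2, b], [b2, b1, b]}
    K = sync (E1 ∪ Ek) (E2 ∪ Ek) (projL (E1 ∪ Ek) K) (projL (E2 ∪ Ek) K) ∧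
    [a1, b2] ∈ sync (E1 ∪ Ek) (E2 ∪ Ek)
      (prefixCl (projL (E1 ∪ Ek) K)) (prefixCl (projL (E2 ∪ Ek) K)) ∧
    [a1, b2] ∉ prefixCl K ∧
    prefixCl K ≠ sync (E1 ∪ Ek) (E2 ∪ Ek)
      (prefixCl (projL (E1 ∪ Ek) K)) (prefixCl (projL (E2 ∪ Ek) K)) := by
  refine ⟨part1, part2, part3, ?_⟩
  intro h
  apply part3
  have h' : prefixCl KS =
      sync F1 F2 (prefixCl (projL F1 KS)) (prefixCl (projL F2 KS)) := h
  rw [h']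
  exact part2
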